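/- For every context-free grammar G = (N, Σ, R, S) there exists a linear context-free grammar G' over the same terminal alphabet Σ with at most |G| production rules, such that L(G') ⊆ L(G) and L(G') is a test set for L(G) (i.e., any two morphisms Σ* → Γ* that agree on every word of L(G') agree on every word of L(G)). -/

import Mathlib

/-- `T` is a test set for a language `L`: `T ⊆ L` and any two morphisms
(monoid homomorphisms between free monoids) that agree on every word of `T`
agree on every word of `L`. -/
def IsTestSet {α : Type*} (T L : Set (List α)) : Prop :=
  T ⊆ L ∧ ∀ (Γ : Type) (f g : FreeMonoid α →* FreeMonoid Γ),
    (∀ w ∈ T, f (FreeMonoid.ofList w) = g (FreeMonoid.ofList w)) →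
    ∀ w ∈ L, f (FreeMonoid.ofList w) = g (FreeMonoid.ofList w)

/-- A context-free grammar is linear if every production right-hand side contains
at most one occurrence of a nonterminal. -/
def ContextFreeGrammar.IsLinear {T : Type*} (g : ContextFreeGrammar T) : Prop :=
  ∀ r ∈ g.rules,
    (r.output.countP fun s => match s with
      | Symbol.nonterminal _ => true
      | Symbol.terminal _ => false) ≤ 1

/-- The size of a context-free grammar: `|G| = Σ_{A→rhs ∈ R} (1 + |rhs|)`. -/
def ContextFreeGrammar.size {T : Type*} (g : ContextFreeGrammar T) : ℕ :=
  ∑ r ∈ g.rules, (1 + r.output.length)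

namespace TestSetAux

open ContextFreeGrammar

variable {T : Type}

/-- `n`-step derivations. -/
inductive DerivesIn (g : ContextFreeGrammar T) :
    List (Symbol T g.NT) → List (Symbol T g.NT) → ℕ → Prop
  | refl (s : List (Symbol T g.NT)) : DerivesIn g s s 0
  | head {u v w : List (Symbol T g.NT)} {n : ℕ} (h : g.Produces u v)
      (hd : DerivesIn g v w n) : DerivesIn g u w (n + 1)

variable {g : ContextFreeGrammar T}

lemma DerivesIn.derives {u v : List (Symbol T g.NT)} {n : ℕ} (h : DerivesIn g u v n) :
    g.Derives u v := by
  induction h with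
  | refl s => exact Derives.refl s
  | head h _ ih => exact h.trans_derives ih

lemma DerivesIn.tail {u v w : List (Symbol T g.NT)} {n : ℕ} (h : DerivesIn g u v n)
    (hp : g.Produces v w) : DerivesIn g u w (n + 1) := by
  induction h with
  | refl s => exact .head hp (.refl w)
  | head h _ ih => exact .head h (ih hp)

lemma derives_iff_derivesIn {u v : List (Symbol T g.NT)} :
    g.Derives u v ↔ ∃ n, DerivesIn g u v n := by
  constructor
  · intro h
    induction h with
    | refl => exact ⟨0, .refl u⟩
    | tail _ hp ih => exact ⟨ih.choose + 1, ih.choose_spec.tail hp⟩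
  · rintro ⟨n, h⟩
    exact h.derives

lemma rewrites_append_split {N : Type*} {r : ContextFreeRule T N} :
    ∀ {s₁ s₂ v : List (Symbol T N)}, r.Rewrites (s₁ ++ s₂) v →
      (∃ v₁, r.Rewrites s₁ v₁ ∧ v = v₁ ++ s₂) ∨ (∃ v₂, r.Rewrites s₂ v₂ ∧ v = s₁ ++ v₂) := by
  intro s₁
  induction s₁ with
  | nil => intro s₂ v h; exact Or.inr ⟨v, h, by simp⟩
  | cons x s₁ ih =>
    intro s₂ v h
    cases h with
    | head s =>
      exact Or.inl ⟨r.output ++ s₁, ContextFreeRule.Rewrites.head s₁, by simp⟩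
    | cons x hrs =>
      rcases ih hrs with ⟨v₁, hv₁, rfl⟩ | ⟨v₂, hv₂, rfl⟩
      · exact Or.inl ⟨x :: v₁, hv₁.cons x, by simp⟩
      · exact Or.inr ⟨v₂, hv₂, by simp⟩

lemma produces_append_split {s₁ s₂ v : List (Symbol T g.NT)} (h : g.Produces (s₁ ++ s₂) v) :
    (∃ v₁, g.Produces s₁ v₁ ∧ v = v₁ ++ s₂) ∨ (∃ v₂, g.Produces s₂ v₂ ∧ v = s₁ ++ v₂) := by
  obtain ⟨r, hr, hrw⟩ := h
  rcases rewrites_append_split hrw with ⟨v₁, hv₁, rfl⟩ | ⟨v₂, hv₂, rfl⟩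
  · exact Or.inl ⟨v₁, ⟨r, hr, hv₁⟩, rfl⟩
  · exact Or.inr ⟨v₂, ⟨r, hr, hv₂⟩, rfl⟩

lemma derivesIn_append_split :
    ∀ {n : ℕ} {s₁ s₂ w : List (Symbol T g.NT)}, DerivesIn g (s₁ ++ s₂) w n →
      ∃ w₁ w₂ n₁ n₂, w = w₁ ++ w₂ ∧ n₁ + n₂ = n ∧
        DerivesIn g s₁ w₁ n₁ ∧ DerivesIn g s₂ w₂ n₂ := by
  intro n
  induction n using Nat.strong_induction_on with
  | _ n ih =>
    intro s₁ s₂ w h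
    cases h with
    | refl => exact ⟨s₁, s₂, 0, 0, rfl, rfl, .refl s₁, .refl s₂⟩
    | @head _ v _ n hp hd =>
      rcases produces_append_split hp with ⟨v₁, hv₁, rfl⟩ | ⟨v₂, hv₂, rfl⟩
      · obtain ⟨w₁, w₂, n₁, n₂, rfl, hn, h₁, h₂⟩ := ih n (Nat.lt_succ_self n) hd
        exact ⟨w₁, w₂, n₁ + 1, n₂, rfl, by omega, .head hv₁ h₁, h₂⟩
      · obtain ⟨w₁, w₂, n₁, n₂, rfl, hn, h₁, h₂⟩ := ih n (Nat.lt_succ_self n) hd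
        exact ⟨w₁, w₂, n₁, n₂ + 1, rfl, by omega, h₁, .head hv₂ h₂⟩

lemma not_produces_terminal {w : List T} {v : List (Symbol T g.NT)}
    (h : g.Produces (List.map Symbol.terminal w) v) : False := by
  obtain ⟨r, _, hrw⟩ := h
  obtain ⟨p, q, hpq, -⟩ := hrw.exists_parts
  have : Symbol.nonterminal r.input ∈ List.map (@Symbol.terminal T g.NT) w := by
    rw [hpq]; simp
  simp only [List.mem_map] at this
  obtain ⟨a, -, ha⟩ := this
  cases ha

lemma derivesIn_terminal {w : List T} {v : List (Symbol T g.NT)} {n : ℕ}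
    (h : DerivesIn g (List.map Symbol.terminal w) v n) :
    v = List.map Symbol.terminal w ∧ n = 0 := by
  cases h with
  | refl => exact ⟨rfl, rfl⟩
  | head hp _ => exact absurd hp not_produces_terminal

lemma map_terminal_split {w : List T} {a b : List (Symbol T g.NT)}
    (h : List.map Symbol.terminal w = a ++ b) :
    ∃ w₁ w₂, w = w₁ ++ w₂ ∧ a = List.map Symbol.terminal w₁ ∧ b = List.map Symbol.terminal w₂ := by
  induction w generalizing a b with
  | nil =>
    rw [List.map_nil] at h
    obtain ⟨rfl, rfl⟩ := List.append_eq_nil_iff.mp h.symm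
    exact ⟨[], [], rfl, rfl, rfl⟩
  | cons x w ih =>
    cases a with
    | nil =>
      exact ⟨[], x :: w, rfl, rfl, by simpa using h.symm⟩
    | cons y a =>
      simp only [List.map_cons, List.cons_append, List.cons.injEq] at h
      obtain ⟨rfl, h⟩ := h
      obtain ⟨w₁, w₂, rfl, rfl, rfl⟩ := ih h
      exact ⟨x :: w₁, w₂, rfl, by simp, rfl⟩

lemma produces_single_nt {A : g.NT} {v : List (Symbol T g.NT)}
    (h : g.Produces [Symbol.nonterminal A] v) :
    ∃ r ∈ g.rules, r.input = A ∧ v = r.output := by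
  obtain ⟨r, hr, hrw⟩ := h
  obtain ⟨p, q, hpq, hv⟩ := hrw.exists_parts
  have hp : p = [] := by
    cases p with
    | nil => rfl
    | cons x p => simp at hpq
  subst hp
  have hq : q = [] := by
    cases q with
    | nil => rfl
    | cons x q => simp at hpq
  subst hq
  simp only [List.nil_append, List.append_nil] at hpq hv
  have : A = r.input := by
    injection hpq with h1 _
    injection h1
  exact ⟨r, hr, this.symm, hv⟩

end TestSetAux
namespace TestSetAux

open ContextFreeGrammar

variable {T : Type}

/-- A nonterminal is productive: it derives some terminal word. -/
def PR (g : ContextFreeGrammar T) (B : g.NT) : Prop :=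
  ∃ n w, DerivesIn g [Symbol.nonterminal B] (List.map Symbol.terminal w) n

open Classical in
/-- Minimal number of steps to derive a terminal word. -/
noncomputable def rank (g : ContextFreeGrammar T) (B : g.NT) : ℕ :=
  if h : PR g B then Nat.find h else 0

variable {g : ContextFreeGrammar T}

lemma DerivesIn.zero_inv {u w : List (Symbol T g.NT)}
    (h : DerivesIn g u w 0) : u = w := by
  cases h with
  | refl => rfl

lemma DerivesIn.head_inv {u w : List (Symbol T g.NT)} {n : ℕ}
    (h : DerivesIn g u w (n + 1)) : ∃ v, g.Produces u v ∧ DerivesIn g v w n := by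
  cases h with
  | head hp hd => exact ⟨_, hp, hd⟩


open Classical in
lemma rank_le {B : g.NT} {n : ℕ} {w : List T}
    (h : DerivesIn g [Symbol.nonterminal B] (List.map Symbol.terminal w) n) :
    rank g B ≤ n := by
  have hPR : PR g B := ⟨n, w, h⟩
  rw [rank, dif_pos hPR]
  exact Nat.find_le ⟨w, h⟩

open Classical in
lemma rank_spec {B : g.NT} (h : PR g B) :
    ∃ w, DerivesIn g [Symbol.nonterminal B] (List.map Symbol.terminal w) (rank g B) := by
  rw [rank, dif_pos h]
  exact Nat.find_spec h

lemma rank_pos {B : g.NT} (h : PR g B) : 0 < rank g B := by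
  rcases Nat.eq_zero_or_pos (rank g B) with hz | hp
  swap
  · exact hp
  · exfalso
    obtain ⟨w, hw⟩ := rank_spec h
    rw [hz] at hw
    have := hw.zero_inv
    cases w <;> simp_all

lemma subPR {s w : List (Symbol T g.NT)} {n : ℕ} (hd : DerivesIn g s w n)
    (hw : ∃ w' : List T, w = List.map Symbol.terminal w')
    {s₁ s₂ : List (Symbol T g.NT)} {B : g.NT}
    (hs : s = s₁ ++ [Symbol.nonterminal B] ++ s₂) : PR g B ∧ rank g B ≤ n := by
  obtain ⟨w', rfl⟩ := hw
  subst hs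
  rw [List.append_assoc] at hd
  obtain ⟨w₁, w₂, n₁, n₂, hw12, hn, h₁, h₂⟩ := derivesIn_append_split hd
  obtain ⟨v₁, v₂, rfl, rfl, rfl⟩ := map_terminal_split hw12
  obtain ⟨w₁', w₂', n₁', n₂', hw12', hn', h₁', h₂'⟩ := derivesIn_append_split h₂
  obtain ⟨u₁, u₂, rfl, rfl, rfl⟩ := map_terminal_split hw12'
  have : rank g B ≤ n₁' := rank_le h₁'
  exact ⟨⟨n₁', u₁, h₁'⟩, by omega⟩

lemma exists_crule {B : g.NT} (h : PR g B) :
    ∃ r, r ∈ g.rules ∧ r.input = B ∧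
      ∃ w, DerivesIn g r.output (List.map Symbol.terminal w) (rank g B - 1) := by
  obtain ⟨w, hw⟩ := rank_spec h
  have hpos := rank_pos h
  obtain ⟨m, hm⟩ : ∃ m, rank g B = m + 1 := ⟨rank g B - 1, by omega⟩
  rw [hm] at hw
  obtain ⟨v, hp, hd⟩ := hw.head_inv
  obtain ⟨r, hr, hin, hout⟩ := produces_single_nt hp
  exact ⟨r, hr, hin, w, by rw [hm]; simpa [← hout] using hd⟩

noncomputable def crule (g : ContextFreeGrammar T) (B : g.NT) (h : PR g B) :
    ContextFreeRule T g.NT :=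
  (exists_crule h).choose

lemma crule_mem {B : g.NT} (h : PR g B) : crule g B h ∈ g.rules :=
  (exists_crule h).choose_spec.1

lemma crule_input {B : g.NT} (h : PR g B) : (crule g B h).input = B :=
  (exists_crule h).choose_spec.2.1

lemma crule_deriv {B : g.NT} (h : PR g B) :
    ∃ w, DerivesIn g (crule g B h).output (List.map Symbol.terminal w) (rank g B - 1) :=
  (exists_crule h).choose_spec.2.2

lemma crule_sub {B : g.NT} (h : PR g B) {s₁ s₂ : List (Symbol T g.NT)} {B' : g.NT}
    (hs : (crule g B h).output = s₁ ++ [Symbol.nonterminal B'] ++ s₂) :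
    PR g B' ∧ rank g B' < rank g B := by
  obtain ⟨w, hw⟩ := crule_deriv h
  obtain ⟨hPR, hle⟩ := subPR hw ⟨w, rfl⟩ hs
  have := rank_pos h
  exact ⟨hPR, by omega⟩

open Classical in
/-- Canonical word with fuel. -/
noncomputable def cF (g : ContextFreeGrammar T) : ℕ → g.NT → List T
  | 0, _ => []
  | (k + 1), B =>
    if h : PR g B then
      (crule g B h).output.flatMap (fun σ =>
        match σ with
        | Symbol.terminal a => [a]
        | Symbol.nonterminal B' => cF g k B')
    else []

lemma cF_not {B : g.NT} (h : ¬ PR g B) (k : ℕ) : cF g k B = [] := by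
  cases k with
  | zero => rfl
  | succ k => rw [cF, dif_neg h]

lemma flatMap_congr' {α β : Type*} {l : List α} {f f' : α → List β}
    (h : ∀ a ∈ l, f a = f' a) : l.flatMap f = l.flatMap f' := by
  induction l with
  | nil => rfl
  | cons x l ih =>
    rw [List.flatMap_cons, List.flatMap_cons, h x (by simp), ih (fun a ha => h a (by simp [ha]))]

lemma cF_stable : ∀ (m : ℕ) (B : g.NT), rank g B ≤ m →
    ∀ a b, rank g B ≤ a → rank g B ≤ b → cF g a B = cF g b B := by
  intro m
  induction m using Nat.strong_induction_on with
  | _ m ih =>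
    intro B hm a b ha hb
    by_cases h : PR g B
    · have hpos := rank_pos h
      obtain ⟨a', rfl⟩ : ∃ a', a = a' + 1 := ⟨a - 1, by omega⟩
      obtain ⟨b', rfl⟩ : ∃ b', b = b' + 1 := ⟨b - 1, by omega⟩
      rw [cF, cF, dif_pos h, dif_pos h]
      apply flatMap_congr'
      intro σ hσ
      cases σ with
      | terminal t => rfl
      | nonterminal B' =>
        obtain ⟨s₁, s₂, hs⟩ := List.append_of_mem hσ
        have hsub := crule_sub h (s₁ := s₁) (s₂ := s₂) (by simpa using hs)
        exact ih (rank g B') (by omega) B' le_rfl a' b' (by omega) (by omega)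
    · rw [cF_not h, cF_not h]

/-- The canonical terminal word derived from a nonterminal. -/
noncomputable def c (g : ContextFreeGrammar T) (B : g.NT) : List T :=
  cF g (rank g B) B

/-- Canonical yield of a sentential form. -/
noncomputable def cy (g : ContextFreeGrammar T) (s : List (Symbol T g.NT)) : List T :=
  s.flatMap (fun σ =>
    match σ with
    | Symbol.terminal a => [a]
    | Symbol.nonterminal B => c g B)

@[simp] lemma cy_nil : cy g [] = [] := rfl

@[simp] lemma cy_cons_terminal (a : T) (s : List (Symbol T g.NT)) :
    cy g (Symbol.terminal a :: s) = a :: cy g s := by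
  simp [cy]

@[simp] lemma cy_cons_nonterminal (B : g.NT) (s : List (Symbol T g.NT)) :
    cy g (Symbol.nonterminal B :: s) = c g B ++ cy g s := by
  simp [cy]

@[simp] lemma cy_append (s₁ s₂ : List (Symbol T g.NT)) :
    cy g (s₁ ++ s₂) = cy g s₁ ++ cy g s₂ := by
  simp [cy]

@[simp] lemma cy_map_terminal (w : List T) :
    cy g (List.map Symbol.terminal w) = w := by
  induction w with
  | nil => rfl
  | cons a w ih => simp [ih]

lemma c_eq {B : g.NT} (h : PR g B) : c g B = cy g (crule g B h).output := by
  have hpos := rank_pos h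
  obtain ⟨k, hk⟩ : ∃ k, rank g B = k + 1 := ⟨rank g B - 1, by omega⟩
  rw [c, hk, cF, dif_pos h, cy]
  apply flatMap_congr'
  intro σ hσ
  cases σ with
  | terminal t => rfl
  | nonterminal B' =>
    obtain ⟨s₁, s₂, hs⟩ := List.append_of_mem hσ
    have hsub := crule_sub h (s₁ := s₁) (s₂ := s₂) (by simpa using hs)
    exact cF_stable (rank g B') B' le_rfl k (rank g B') (by omega) le_rfl

/-- Every nonterminal occurring in `s` is productive. -/
def allPR (g : ContextFreeGrammar T) (s : List (Symbol T g.NT)) : Prop :=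
  ∀ s₁ B s₂, s = s₁ ++ [Symbol.nonterminal B] ++ s₂ → PR g B

lemma allPR_left {s₁ s₂ : List (Symbol T g.NT)} (h : allPR g (s₁ ++ s₂)) : allPR g s₁ := by
  rintro t₁ B t₂ rfl
  exact h t₁ B (t₂ ++ s₂) (by simp)

lemma allPR_right {s₁ s₂ : List (Symbol T g.NT)} (h : allPR g (s₁ ++ s₂)) : allPR g s₂ := by
  rintro t₁ B t₂ rfl
  exact h (s₁ ++ t₁) B t₂ (by simp)

lemma derives_cy_of (s : List (Symbol T g.NT))
    (hs : ∀ s₁ B s₂, s = s₁ ++ [Symbol.nonterminal B] ++ s₂ →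
        g.Derives [Symbol.nonterminal B] (List.map Symbol.terminal (c g B))) :
    g.Derives s (List.map Symbol.terminal (cy g s)) := by
  induction s with
  | nil => simpa using Derives.refl ([] : List (Symbol T g.NT))
  | cons σ s ih =>
    have ih' := ih (fun s₁ B s₂ h => hs (σ :: s₁) B s₂ (by rw [h]; rfl))
    cases σ with
    | terminal a =>
      have := ih'.append_left [Symbol.terminal a]
      simpa using this
    | nonterminal B =>
      have h1 : g.Derives [Symbol.nonterminal B]
          (List.map Symbol.terminal (c g B)) := hs [] B s rfl
      have h2 := (h1.append_right s).trans
        ((ih'.append_left (List.map Symbol.terminal (c g B))))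
      simpa using h2

lemma cderivg : ∀ (n : ℕ) (B : g.NT), PR g B → rank g B ≤ n →
    g.Derives [Symbol.nonterminal B] (List.map Symbol.terminal (c g B)) := by
  intro n
  induction n using Nat.strong_induction_on with
  | _ n ih =>
    intro B h hn
    have hstep : g.Produces [Symbol.nonterminal B] (crule g B h).output :=
      ⟨crule g B h, crule_mem h, by
        have := ContextFreeRule.Rewrites.input_output (r := crule g B h)
        rwa [crule_input h] at this⟩
    rw [c_eq h]
    refine hstep.trans_derives (derives_cy_of _ ?_)
    intro s₁ B' s₂ hsplit
    obtain ⟨hPR', hlt⟩ := crule_sub h hsplit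
    exact ih (rank g B') (by omega) B' hPR' le_rfl

end TestSetAux
namespace TestSetAux

open ContextFreeGrammar

variable {T : Type}

/-- A linearized rule. -/
noncomputable def linOf (g : ContextFreeGrammar T) (A : g.NT) (s₁ : List (Symbol T g.NT))
    (B : g.NT) (s₂ : List (Symbol T g.NT)) : ContextFreeRule T g.NT :=
  ⟨A, List.map Symbol.terminal (cy g s₁) ++ [Symbol.nonterminal B] ++
      List.map Symbol.terminal (cy g s₂)⟩

open Classical in
/-- The linearization of rule `r` at position `i` (if a productive-context nonterminal sits
there). -/
noncomputable def linAt (g : ContextFreeGrammar T) (r : ContextFreeRule T g.NT) (i : ℕ) :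
    Option (ContextFreeRule T g.NT) :=
  match r.output.drop i with
  | [] => none
  | Symbol.terminal _ :: _ => none
  | Symbol.nonterminal B :: rest =>
    if allPR g (r.output.take i) ∧ allPR g rest then
      some (linOf g r.input (r.output.take i) B rest)
    else none

open Classical in
/-- All linearizations of a rule. -/
noncomputable def lins (g : ContextFreeGrammar T) (r : ContextFreeRule T g.NT) :
    List (ContextFreeRule T g.NT) :=
  (if ∃ w : List T, r.output = List.map Symbol.terminal w then [r] else []) ++
    (List.range r.output.length).filterMap (linAt g r)

lemma length_lins (g : ContextFreeGrammar T) (r : ContextFreeRule T g.NT) :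
    (lins g r).length ≤ 1 + r.output.length := by
  rw [lins, List.length_append]
  have h2 := List.length_filterMap_le (linAt g r) (List.range r.output.length)
  simp only [List.length_range] at h2
  split <;> simp <;> omega

open Classical in
/-- The linear grammar. -/
noncomputable def glin (g : ContextFreeGrammar T) : ContextFreeGrammar T :=
  ⟨g.NT, g.initial, g.rules.biUnion (fun r => (lins g r).toFinset)⟩

attribute [reducible] glin

variable {g : ContextFreeGrammar T}

open Classical in
lemma glin_rules_eq : (glin g).rules = g.rules.biUnion (fun r => (lins g r).toFinset) := rfl

lemma mem_glin_rules {r' : ContextFreeRule T g.NT} :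
    r' ∈ (glin g).rules ↔ ∃ r ∈ g.rules, r' ∈ lins g r := by
  classical
  rw [glin_rules_eq]
  simp only [Finset.mem_biUnion, List.mem_toFinset]

lemma mem_lins_terminal {r : ContextFreeRule T g.NT} {w : List T}
    (h : r.output = List.map Symbol.terminal w) : r ∈ lins g r := by
  classical
  rw [lins, if_pos ⟨w, h⟩]
  simp

lemma mem_lins_split {r : ContextFreeRule T g.NT} {s₁ s₂ : List (Symbol T g.NT)} {B : g.NT}
    (h : r.output = s₁ ++ [Symbol.nonterminal B] ++ s₂)
    (h₁ : allPR g s₁) (h₂ : allPR g s₂) :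
    linOf g r.input s₁ B s₂ ∈ lins g r := by
  classical
  rw [lins]
  refine List.mem_append_right _ ?_
  rw [List.mem_filterMap]
  refine ⟨s₁.length, ?_, ?_⟩
  · rw [List.mem_range, h]
    simp
  · have hdrop : r.output.drop s₁.length = Symbol.nonterminal B :: s₂ := by
      rw [h, List.append_assoc, List.drop_left]
      rfl
    have htake : r.output.take s₁.length = s₁ := by
      rw [h, List.append_assoc, List.take_left]
    rw [linAt, hdrop]
    simp only [htake]
    rw [if_pos ⟨h₁, h₂⟩]

lemma lins_inv {r r' : ContextFreeRule T g.NT} (h : r' ∈ lins g r) :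
    (∃ w, r' = r ∧ r.output = List.map Symbol.terminal w) ∨
    (∃ s₁ B s₂, r.output = s₁ ++ [Symbol.nonterminal B] ++ s₂ ∧ allPR g s₁ ∧ allPR g s₂ ∧
      r' = linOf g r.input s₁ B s₂) := by
  classical
  rw [lins] at h
  rcases List.mem_append.mp h with h | h
  · left
    split at h
    · rename_i hex
      obtain ⟨w, hw⟩ := hex
      simp only [List.mem_singleton] at h
      exact ⟨w, h, hw⟩
    · simp at h
  · right
    rw [List.mem_filterMap] at h
    obtain ⟨i, -, hi⟩ := h
    rw [linAt] at hi
    split at hi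
    · exact absurd hi (by simp)
    · exact absurd hi (by simp)
    · rename_i B rest hdrop
      split at hi
      · rename_i hcond
        refine ⟨r.output.take i, B, rest, ?_, hcond.1, hcond.2, by
          injection hi with h'; exact h'.symm⟩
        conv_lhs => rw [← List.take_append_drop i r.output]
        rw [hdrop]
        simp
      · exact absurd hi (by simp)

lemma glin_rule_linear {r' : ContextFreeRule T g.NT} (h : r' ∈ (glin g).rules) :
    (r'.output.countP fun s => match s with
      | Symbol.nonterminal _ => true
      | Symbol.terminal _ => false) ≤ 1 := by
  obtain ⟨r, -, hmem⟩ := mem_glin_rules.mp h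
  rcases lins_inv hmem with ⟨w, rfl, hout⟩ | ⟨s₁, B, s₂, -, -, -, rfl⟩
  · rw [hout]
    simp [List.countP_map, Function.comp_def]
  · rw [linOf]
    simp [List.countP_append, List.countP_map, List.countP_cons, Function.comp_def]

lemma glin_card_le : (glin g).rules.card ≤ g.size := by
  classical
  rw [glin_rules_eq, ContextFreeGrammar.size]
  refine (Finset.card_biUnion_le).trans ?_
  refine Finset.sum_le_sum ?_
  intro r _
  exact (List.toFinset_card_le _).trans (length_lins g r)

lemma glin_rule_derivable {r' : ContextFreeRule T g.NT} (h : r' ∈ (glin g).rules) :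
    g.Derives [Symbol.nonterminal r'.input] r'.output := by
  obtain ⟨r, hr, hmem⟩ := mem_glin_rules.mp h
  rcases lins_inv hmem with ⟨w, heq, -⟩ | ⟨s₁, B, s₂, hout, h₁, h₂, rfl⟩
  · cases heq
    exact (Produces.single ⟨_, hr, ContextFreeRule.Rewrites.input_output⟩)
  · have hstep : g.Produces [Symbol.nonterminal r.input] (s₁ ++ [Symbol.nonterminal B] ++ s₂) :=
      ⟨r, hr, by rw [← hout]; exact ContextFreeRule.Rewrites.input_output⟩
    refine hstep.trans_derives ?_
    have hc : ∀ (s : List (Symbol T g.NT)), allPR g s →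
        g.Derives s (List.map Symbol.terminal (cy g s)) := by
      intro s hall
      exact derives_cy_of s (fun t₁ B' t₂ ht =>
        cderivg (rank g B') B' (hall t₁ B' t₂ ht) le_rfl)
    have hd1 := (hc s₁ h₁).append_right ([Symbol.nonterminal B] ++ s₂)
    have hd2 := ((hc s₂ h₂).append_left
      (List.map Symbol.terminal (cy g s₁) ++ [Symbol.nonterminal B]))
    rw [linOf]
    refine Derives.trans (by simpa [List.append_assoc] using hd1) ?_
    simpa [List.append_assoc] using hd2

lemma glin_derives_sub {u v : List (Symbol T g.NT)} (h : (glin g).Derives u v) :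
    g.Derives u v := by
  induction h with
  | refl => exact Derives.refl _
  | tail _ hp ih =>
    obtain ⟨r', hr', hrw⟩ := hp
    obtain ⟨p, q, rfl, rfl⟩ := hrw.exists_parts
    exact ih.trans (((glin_rule_derivable hr').append_left p).append_right q)

lemma term_or_split (s : List (Symbol T g.NT)) :
    (∃ w, s = List.map Symbol.terminal w) ∨
    ∃ s₁ B s₂, s = s₁ ++ [Symbol.nonterminal B] ++ s₂ := by
  induction s with
  | nil => exact Or.inl ⟨[], rfl⟩
  | cons σ s ih =>
    cases σ with
    | terminal a =>
      rcases ih with ⟨w, rfl⟩ | ⟨s₁, B, s₂, rfl⟩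
      · exact Or.inl ⟨a :: w, rfl⟩
      · exact Or.inr ⟨Symbol.terminal a :: s₁, B, s₂, rfl⟩
    | nonterminal B => exact Or.inr ⟨[], B, s, rfl⟩

lemma glin_derives_cy_of {r : ContextFreeRule T g.NT} (hr : r ∈ g.rules)
    (hall : allPR g r.output)
    (hc : ∀ s₁ B s₂, r.output = s₁ ++ [Symbol.nonterminal B] ++ s₂ →
      (glin g).Derives [Symbol.nonterminal B] (List.map Symbol.terminal (c g B))) :
    (glin g).Derives [Symbol.nonterminal r.input]
      (List.map Symbol.terminal (cy g r.output)) := by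
  rcases term_or_split r.output with ⟨w, hw⟩ | ⟨s₁, B, s₂, hs⟩
  · have hmem : r ∈ (glin g).rules := mem_glin_rules.mpr ⟨r, hr, mem_lins_terminal hw⟩
    have := Produces.single (g := glin g) ⟨r, hmem, ContextFreeRule.Rewrites.input_output⟩
    rw [hw] at this ⊢
    simpa using this
  · have hall' : allPR g (s₁ ++ [Symbol.nonterminal B] ++ s₂) := hs ▸ hall
    have hmem : linOf g r.input s₁ B s₂ ∈ (glin g).rules :=
      mem_glin_rules.mpr ⟨r, hr, mem_lins_split hs (allPR_left (allPR_left hall'))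
        (allPR_right hall')⟩
    have hstep : (glin g).Produces [Symbol.nonterminal r.input] (linOf g r.input s₁ B s₂).output :=
      ⟨_, hmem, ContextFreeRule.Rewrites.input_output⟩
    have hPRB : PR g B := hall s₁ B s₂ hs
    have hcB := hc s₁ B s₂ hs
    refine hstep.trans_derives ?_
    rw [linOf]
    have := (hcB.append_right (List.map Symbol.terminal (cy g s₂))).append_left
      (List.map Symbol.terminal (cy g s₁))
    rw [hs]
    simp only [cy_append, cy_cons_nonterminal, cy_nil, List.map_append, List.append_assoc]
    simpa [List.append_assoc] using this

lemma cderiv' : ∀ (n : ℕ) (B : g.NT), PR g B → rank g B ≤ n →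
    (glin g).Derives [Symbol.nonterminal B] (List.map Symbol.terminal (c g B)) := by
  intro n
  induction n using Nat.strong_induction_on with
  | _ n ih =>
    intro B h hn
    have hall : allPR g (crule g B h).output := fun s₁ B' s₂ hs => (crule_sub h hs).1
    have := glin_derives_cy_of (crule_mem h) hall
      (fun s₁ B' s₂ hs => ih (rank g B') (by have := (crule_sub h hs).2; omega) B'
        (crule_sub h hs).1 le_rfl)
    rw [crule_input h, ← c_eq h] at this
    exact this

end TestSetAux
namespace TestSetAux

open ContextFreeGrammar

variable {T : Type}

lemma list_exchange {β : Type*} {x x' y y' z z' t t' : List β}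
    (h1 : x ++ z = x' ++ z') (h2 : y ++ z = y' ++ z') (h3 : x ++ t = x' ++ t') :
    y ++ t = y' ++ t' := by
  rcases List.append_eq_append_iff.mp h1 with ⟨p, rfl, rfl⟩ | ⟨p, rfl, rfl⟩
  · rw [← List.append_assoc] at h2
    have hy : y ++ p = y' := List.append_cancel_right h2
    rw [List.append_assoc] at h3
    have ht : t = p ++ t' := List.append_cancel_left h3
    rw [ht, ← hy, List.append_assoc]
  · rw [← List.append_assoc] at h2
    have hy : y = y' ++ p := List.append_cancel_right h2
    rw [List.append_assoc] at h3
    have ht : p ++ t = t' := List.append_cancel_left h3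
    rw [← ht, hy, List.append_assoc]

/-- The two morphisms agree on the word `w`. -/
def Agr {Γ : Type} (f h : FreeMonoid T →* FreeMonoid Γ) (w : List T) : Prop :=
  f (FreeMonoid.ofList w) = h (FreeMonoid.ofList w)

lemma Agr.of_eq {Γ : Type} {f h : FreeMonoid T →* FreeMonoid Γ} {w w' : List T}
    (ha : Agr f h w) (he : w = w') : Agr f h w' := he ▸ ha

lemma agr_append_toList {Γ : Type} (f : FreeMonoid T →* FreeMonoid Γ) (a b : List T) :
    FreeMonoid.toList (f (FreeMonoid.ofList (a ++ b))) =
      FreeMonoid.toList (f (FreeMonoid.ofList a)) ++ FreeMonoid.toList (f (FreeMonoid.ofList b)) := by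
  rw [FreeMonoid.ofList_append, map_mul, FreeMonoid.toList_mul]

lemma agr_exchange {Γ : Type} (f h : FreeMonoid T →* FreeMonoid Γ) {X Y Z W : List T}
    (h1 : Agr f h (X ++ Z)) (h2 : Agr f h (Y ++ Z)) (h3 : Agr f h (X ++ W)) :
    Agr f h (Y ++ W) := by
  have key : ∀ {a : List T}, Agr f h a ↔
      FreeMonoid.toList (f (FreeMonoid.ofList a)) = FreeMonoid.toList (h (FreeMonoid.ofList a)) := by
    intro a
    exact ⟨fun hq => by rw [hq], fun hq => FreeMonoid.toList.injective hq⟩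
  rw [key] at h1 h2 h3 ⊢
  rw [agr_append_toList, agr_append_toList] at h1 h2 h3 ⊢
  exact list_exchange h1 h2 h3

variable {g : ContextFreeGrammar T}

/-- `(u, v)` is a context for the nonterminal `A` reachable in the linear grammar. -/
def Ctx (g : ContextFreeGrammar T) (u : List T) (A : g.NT) (v : List T) : Prop :=
  (glin g).Derives [Symbol.nonterminal g.initial]
    (List.map Symbol.terminal u ++ [Symbol.nonterminal A] ++ List.map Symbol.terminal v)

lemma ctx_mem {u v m : List T} {A : g.NT} (hc : Ctx g u A v)
    (hd : (glin g).Derives [Symbol.nonterminal A] (List.map Symbol.terminal m)) :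
    (u ++ m ++ v) ∈ (glin g).language := by
  rw [mem_language_iff]
  refine hc.trans ?_
  have := (hd.append_right (List.map Symbol.terminal v)).append_left (List.map Symbol.terminal u)
  simpa [List.append_assoc] using this

lemma helper {Γ : Type} (f h : FreeMonoid T →* FreeMonoid Γ) (q : List T) :
    ∀ (s : List (Symbol T g.NT)) (w p : List T) (m : ℕ),
      DerivesIn g s (List.map Symbol.terminal w) m →
      (∀ s₁ B s₂, s = s₁ ++ [Symbol.nonterminal B] ++ s₂ →
        Agr f h (p ++ cy g s₁ ++ c g B ++ cy g s₂ ++ q) ∧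
        ∀ w' m', m' ≤ m → DerivesIn g [Symbol.nonterminal B] (List.map Symbol.terminal w') m' →
          Agr f h (p ++ cy g s₁ ++ w' ++ cy g s₂ ++ q)) →
      Agr f h (p ++ cy g s ++ q) → Agr f h (p ++ w ++ q) := by
  intro s
  induction s with
  | nil =>
    intro w p m hd _ hbase
    obtain ⟨hw, -⟩ := derivesIn_terminal (w := []) hd
    have : w = [] := by simpa using hw
    subst this
    exact hbase.of_eq (by simp)
  | cons σ s ih =>
    intro w p m hd hHC hbase
    obtain ⟨w₁', w₂', m₁, m₂, hw12, hm, hd₁, hd₂⟩ := derivesIn_append_split (s₁ := [σ]) hd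
    obtain ⟨w₁, w₂, rfl, rfl, rfl⟩ := map_terminal_split hw12
    cases σ with
    | terminal a =>
      obtain ⟨heq, -⟩ := derivesIn_terminal (w := [a]) hd₁
      have hw₁ : w₁ = [a] := by
        cases w₁ with
        | nil => simp at heq
        | cons b t => simp_all
      subst hw₁
      refine (ih w₂ (p ++ [a]) m₂ hd₂ ?_ ?_).of_eq (by simp)
      · intro s₁ B s₂ hs
        have hold := hHC (Symbol.terminal a :: s₁) B s₂ (by rw [hs]; rfl)
        refine ⟨hold.1.of_eq (by simp), ?_⟩
        intro w' m' hm' hd'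
        exact (hold.2 w' m' (by omega) hd').of_eq (by simp)
      · exact hbase.of_eq (by simp)
    | nonterminal B =>
      have hSC := hHC [] B s rfl
      have hA1 : Agr f h (p ++ w₁ ++ cy g s ++ q) :=
        (hSC.2 w₁ m₁ (by omega) hd₁).of_eq (by simp)
      refine (ih w₂ (p ++ w₁) m₂ hd₂ ?_ ?_).of_eq (by simp)
      · intro s₁ B' s₂ hs
        have hold := hHC (Symbol.nonterminal B :: s₁) B' s₂ (by rw [hs]; rfl)
        subst hs
        constructor
        · exact hA1.of_eq (by simp)
        · intro w' m' hm' hd'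
          have h1 : Agr f h ((p ++ c g B ++ cy g s₁) ++ (c g B' ++ (cy g s₂ ++ q))) :=
            hold.1.of_eq (by simp)
          have h2 : Agr f h ((p ++ w₁ ++ cy g s₁) ++ (c g B' ++ (cy g s₂ ++ q))) :=
            hA1.of_eq (by simp)
          have h3 : Agr f h ((p ++ c g B ++ cy g s₁) ++ (w' ++ (cy g s₂ ++ q))) :=
            (hold.2 w' m' (by omega) hd').of_eq (by simp)
          exact (agr_exchange f h h1 h2 h3).of_eq (by simp)
      · exact hA1.of_eq (by simp)

lemma main {Γ : Type} (f h : FreeMonoid T →* FreeMonoid Γ)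
    (hfh : ∀ w ∈ (glin g).language, f (FreeMonoid.ofList w) = h (FreeMonoid.ofList w)) :
    ∀ (n : ℕ) (A : g.NT) (w u v : List T),
      DerivesIn g [Symbol.nonterminal A] (List.map Symbol.terminal w) n →
      Ctx g u A v → Agr f h (u ++ w ++ v) := by
  intro n
  induction n using Nat.strong_induction_on with
  | _ n ihn =>
    intro A w u v hd hctx
    cases n with
    | zero =>
      have := hd.zero_inv
      cases w <;> simp_all
    | succ n' =>
      obtain ⟨s, hp, hd'⟩ := hd.head_inv
      obtain ⟨r, hr, hin, rfl⟩ := produces_single_nt hp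
      subst hin
      have hallout : allPR g r.output := fun s₁ B s₂ hs => (subPR hd' ⟨w, rfl⟩ hs).1
      have hbase : Agr f h (u ++ cy g r.output ++ v) := by
        have hder : (glin g).Derives [Symbol.nonterminal r.input]
            (List.map Symbol.terminal (cy g r.output)) :=
          glin_derives_cy_of hr hallout
            (fun s₁ B s₂ hs => cderiv' (g := g) (rank g B) B (subPR hd' ⟨w, rfl⟩ hs).1 le_rfl)
        exact hfh _ (ctx_mem hctx hder)
      refine helper f h v r.output w u n' hd' ?_ hbase
      intro s₁ B s₂ hs
      have hPRB : PR g B := (subPR hd' ⟨w, rfl⟩ hs).1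
      have hall' : allPR g (s₁ ++ [Symbol.nonterminal B] ++ s₂) := hs ▸ hallout
      have hrule : linOf g r.input s₁ B s₂ ∈ (glin g).rules :=
        mem_glin_rules.mpr ⟨r, hr, mem_lins_split hs (allPR_left (allPR_left hall'))
          (allPR_right hall')⟩
      have hctx' : Ctx g (u ++ cy g s₁) B (cy g s₂ ++ v) := by
        have step : (glin g).Produces
            (List.map Symbol.terminal u ++ [Symbol.nonterminal r.input] ++ List.map Symbol.terminal v)
            (List.map Symbol.terminal u ++ (linOf g r.input s₁ B s₂).output ++ List.map Symbol.terminal v) :=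
          ⟨_, hrule, ContextFreeRule.rewrites_of_exists_parts _ _ _⟩
        have := hctx.trans_produces step
        simpa only [Ctx, linOf, List.map_append, List.append_assoc] using this
      constructor
      · have hmem := ctx_mem hctx' (cderiv' (g := g) (rank g B) B hPRB le_rfl)
        have hA : Agr f h (u ++ cy g s₁ ++ c g B ++ (cy g s₂ ++ v)) := hfh _ hmem
        exact hA.of_eq (by simp)
      · intro w' m' hm' hd''
        exact (ihn m' (by omega) B w' (u ++ cy g s₁) (cy g s₂ ++ v) hd'' hctx').of_eq (by simp)

end TestSetAux

namespace TestSetAux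

open ContextFreeGrammar

universe uu vv

section Transport

variable {T : Type}

/-- Map nonterminals of a symbol. -/
def symbolMap {N : Type uu} {M : Type vv} (f : N → M) : Symbol T N → Symbol T M
  | .terminal a => .terminal a
  | .nonterminal B => .nonterminal (f B)

/-- Map nonterminals of a rule. -/
def ruleMap {N : Type uu} {M : Type vv} (f : N → M) (r : ContextFreeRule T N) :
    ContextFreeRule T M :=
  ⟨f r.input, r.output.map (symbolMap f)⟩

lemma rewrites_map {N : Type uu} {M : Type vv} (f : N → M) {r : ContextFreeRule T N}
    {u v : List (Symbol T N)} (h : r.Rewrites u v) :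
    (ruleMap f r).Rewrites (u.map (symbolMap f)) (v.map (symbolMap f)) := by
  induction h with
  | head s =>
    have := ContextFreeRule.Rewrites.head (r := ruleMap f r) (s.map (symbolMap f))
    simpa [ruleMap, symbolMap] using this
  | cons x _ ih => exact ih.cons _

variable (h : ContextFreeGrammar T)

open Classical in
/-- All nonterminals appearing in the grammar. -/
noncomputable def usedNT : Finset h.NT :=
  insert h.initial (h.rules.biUnion (fun r =>
    insert r.input (r.output.filterMap (fun σ =>
      match σ with
      | Symbol.nonterminal B => some B
      | Symbol.terminal _ => none)).toFinset))

lemma initial_mem_usedNT : h.initial ∈ usedNT h := by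
  classical
  rw [usedNT]; exact Finset.mem_insert_self _ _

lemma input_mem_usedNT {r : ContextFreeRule T h.NT} (hr : r ∈ h.rules) :
    r.input ∈ usedNT h := by
  classical
  rw [usedNT]
  refine Finset.mem_insert_of_mem (Finset.mem_biUnion.mpr ⟨r, hr, ?_⟩)
  exact Finset.mem_insert_self _ _

lemma outNT_mem_usedNT {r : ContextFreeRule T h.NT} (hr : r ∈ h.rules) {B : h.NT}
    (hB : Symbol.nonterminal B ∈ r.output) : B ∈ usedNT h := by
  classical
  rw [usedNT]
  refine Finset.mem_insert_of_mem (Finset.mem_biUnion.mpr ⟨r, hr, ?_⟩)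
  refine Finset.mem_insert_of_mem ?_
  rw [List.mem_toFinset, List.mem_filterMap]
  exact ⟨Symbol.nonterminal B, hB, rfl⟩

open Classical in
/-- Encoding of nonterminals into `Fin`. -/
noncomputable def ntEnc (B : h.NT) : Fin (usedNT h).card :=
  if hB : B ∈ usedNT h then (usedNT h).equivFin ⟨B, hB⟩
  else (usedNT h).equivFin ⟨h.initial, initial_mem_usedNT h⟩

noncomputable def ntDec (i : Fin (usedNT h).card) : h.NT :=
  ((usedNT h).equivFin.symm i : h.NT)

lemma ntDec_ntEnc {B : h.NT} (hB : B ∈ usedNT h) : ntDec h (ntEnc h B) = B := by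
  rw [ntEnc, dif_pos hB, ntDec, Equiv.symm_apply_apply]

/-- Encoding map on nonterminals, into an arbitrary universe. -/
noncomputable def ntEnc' (B : h.NT) : ULift.{vv} (Fin (usedNT h).card) := ⟨ntEnc h B⟩

noncomputable def ntDec' (i : ULift.{vv} (Fin (usedNT h).card)) : h.NT := ntDec h i.down

open Classical in
/-- The grammar with nonterminals relabeled into a small type in an arbitrary universe. -/
noncomputable def gsmall : ContextFreeGrammar T :=
  ⟨ULift (Fin (usedNT h).card), ntEnc' h h.initial, h.rules.image (ruleMap (ntEnc' h))⟩

attribute [reducible] gsmall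

lemma ruleMap_inv {r : ContextFreeRule T h.NT} (hr : r ∈ h.rules) :
    ruleMap (ntDec'.{vv} h) (ruleMap (ntEnc'.{vv} h) r) = r := by
  ext : 1
  · show ntDec' h (ntEnc' h r.input) = r.input
    exact ntDec_ntEnc h (input_mem_usedNT h hr)
  · show (r.output.map (symbolMap (ntEnc' h))).map (symbolMap (ntDec' h)) = r.output
    rw [List.map_map]
    conv_rhs => rw [← List.map_id r.output]
    refine List.map_congr_left ?_
    intro σ hσ
    cases σ with
    | terminal a => rfl
    | nonterminal B =>
      show Symbol.nonterminal (ntDec' h (ntEnc' h B)) = Symbol.nonterminal B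
      rw [show ntDec' h (ntEnc' h B) = ntDec h (ntEnc h B) from rfl,
        ntDec_ntEnc h (outNT_mem_usedNT h hr hσ)]

lemma gsmall_derives_fwd {u v : List (Symbol T h.NT)} (hd : h.Derives u v) :
    (gsmall h).Derives (u.map (symbolMap (ntEnc' h))) (v.map (symbolMap (ntEnc' h))) := by
  classical
  induction hd with
  | refl => exact Derives.refl _
  | tail _ hp ih =>
    obtain ⟨r, hr, hrw⟩ := hp
    refine ih.trans_produces ⟨ruleMap (ntEnc' h) r, ?_, rewrites_map _ hrw⟩
    exact Finset.mem_image_of_mem _ hr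

lemma gsmall_derives_bwd {u v : List (Symbol T (gsmall h).NT)}
    (hd : (gsmall h).Derives u v) :
    h.Derives (u.map (symbolMap (ntDec' h))) (v.map (symbolMap (ntDec' h))) := by
  classical
  induction hd with
  | refl => exact Derives.refl _
  | tail _ hp ih =>
    obtain ⟨r', hr', hrw⟩ := hp
    rw [show (gsmall h).rules = h.rules.image (ruleMap (ntEnc' h)) from rfl] at hr'
    obtain ⟨r, hr, rfl⟩ := Finset.mem_image.mp hr'
    have := rewrites_map (ntDec' h) hrw
    rw [ruleMap_inv h hr] at this
    exact ih.trans_produces ⟨r, hr, this⟩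

lemma ntDec'_ntEnc' {B : h.NT} (hB : B ∈ usedNT h) : ntDec'.{vv} h (ntEnc'.{vv} h B) = B :=
  ntDec_ntEnc h hB

lemma gsmall_language : (gsmall h).language = h.language := by
  ext w
  rw [mem_language_iff, mem_language_iff]
  constructor
  · intro hd
    have h2 := gsmall_derives_bwd h hd
    have e1 : ([Symbol.nonterminal (gsmall h).initial] :
        List (Symbol T (gsmall h).NT)).map (symbolMap (ntDec' h))
        = [Symbol.nonterminal h.initial] := by
      show [symbolMap (ntDec' h) (Symbol.nonterminal (ntEnc' h h.initial))] = _
      simp [symbolMap, ntDec'_ntEnc' h (initial_mem_usedNT h)]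
    have e2 : (List.map (Symbol.terminal (N := (gsmall h).NT)) w).map
        (symbolMap (ntDec' h)) = List.map Symbol.terminal w := by
      simp [List.map_map, Function.comp_def, symbolMap]
    rw [e1, e2] at h2
    exact h2
  · intro hd
    have h2 := gsmall_derives_fwd h hd
    have e1 : ([Symbol.nonterminal h.initial] : List (Symbol T h.NT)).map
        (symbolMap (ntEnc'.{0} h))
        = [Symbol.nonterminal (gsmall h).initial] := by
      simp [symbolMap]
    have e2 : (List.map (Symbol.terminal (N := h.NT)) w).map
        (symbolMap (ntEnc'.{0} h)) = List.map Symbol.terminal w := by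
      simp [List.map_map, Function.comp_def, symbolMap]
    rw [e1, e2] at h2
    exact h2

lemma gsmall_card : (gsmall h).rules.card ≤ h.rules.card := by
  classical
  exact Finset.card_image_le

lemma gsmall_linear (hlin : h.IsLinear) : (gsmall h).IsLinear := by
  classical
  intro r' hr'
  rw [show (gsmall h).rules = h.rules.image (ruleMap (ntEnc' h)) from rfl] at hr'
  obtain ⟨r, hr, rfl⟩ := Finset.mem_image.mp hr'
  have := hlin r hr
  rw [ruleMap, List.countP_map]
  refine le_trans (le_of_eq ?_) this
  apply List.countP_congr
  intro σ hσ
  cases σ <;> rfl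

end Transport

end TestSetAux
/-- For every context-free grammar `g` there is a linear context-free grammar `g'`
over the same terminal alphabet with at most `|g|` rules, whose language is contained
in `L(g)` and is a test set for `L(g)`. -/
theorem exists_linear_grammar_testSet {T : Type} (g : ContextFreeGrammar T) :
    ∃ g' : ContextFreeGrammar T, g'.IsLinear ∧ g'.rules.card ≤ g.size ∧
      { w | w ∈ g'.language } ⊆ { w | w ∈ g.language } ∧
      IsTestSet { w | w ∈ g'.language } { w | w ∈ g.language } := by
  classical
  refine ⟨TestSetAux.gsmall (TestSetAux.glin g), ?_, ?_, ?_, ?_, ?_⟩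
  · refine TestSetAux.gsmall_linear (TestSetAux.glin g) ?_
    intro r hr
    have h2 := TestSetAux.glin_rule_linear (g := g) hr
    refine le_trans (le_of_eq ?_) h2
    apply List.countP_congr
    intro σ hσ
    cases σ <;> rfl
  · exact (TestSetAux.gsmall_card _).trans TestSetAux.glin_card_le
  · intro w hw
    simp only [Set.mem_setOf_eq, TestSetAux.gsmall_language] at hw
    simp only [Set.mem_setOf_eq, ContextFreeGrammar.mem_language_iff] at hw ⊢
    exact TestSetAux.glin_derives_sub hw
  · intro w hw
    simp only [Set.mem_setOf_eq, TestSetAux.gsmall_language] at hw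
    simp only [Set.mem_setOf_eq, ContextFreeGrammar.mem_language_iff] at hw ⊢
    exact TestSetAux.glin_derives_sub hw
  · intro Γ f h hfh w hw
    simp only [Set.mem_setOf_eq, ContextFreeGrammar.mem_language_iff] at hw
    obtain ⟨n, hd⟩ := TestSetAux.derives_iff_derivesIn.mp hw
    have hctx : TestSetAux.Ctx g [] g.initial [] := by
      simpa [TestSetAux.Ctx] using
        ContextFreeGrammar.Derives.refl (g := TestSetAux.glin g)
          [Symbol.nonterminal (TestSetAux.glin g).initial]
    have hfh' : ∀ w' ∈ (TestSetAux.glin g).language,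
        f (FreeMonoid.ofList w') = h (FreeMonoid.ofList w') := by
      intro w' hw'
      refine hfh w' ?_
      simp only [Set.mem_setOf_eq, TestSetAux.gsmall_language]
      exact hw'
    have := TestSetAux.main f h hfh' n g.initial w [] [] hd hctx
    simpa [TestSetAux.Agr] using this
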